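/- For any graph G, the symmetrized Tutte polynomial satisfies χ_G(t,t) = Σ_{H ⊆ E(G)} χ_{G|H}(0,t) · χ_{G/H}(t,0), where the sum is over all subsets H of the edge set of G. -/

import Mathlib

/-- A finite multigraph: vertices, edges, and an endpoint map allowing loops
and parallel edges. -/
structure Multigraph where
  V : Type
  E : Type
  [fintypeV : Fintype V]
  [fintypeE : Fintype E]
  [decEqV : DecidableEq V]
  [decEqE : DecidableEq E]
  ends : E → Sym2 V

attribute [instance] Multigraph.fintypeV Multigraph.fintypeE
  Multigraph.decEqV Multigraph.decEqE

namespace Multigraph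

/-- The simple graph on `G.V` whose adjacency is induced by the edges in `H`. -/
def sg (G : Multigraph) (H : Finset G.E) : SimpleGraph G.V :=
  SimpleGraph.fromRel (fun x y => ∃ e ∈ H, G.ends e = s(x, y))

/-- Number of connected components of the spanning subgraph `G|H`. -/
noncomputable def k (G : Multigraph) (H : Finset G.E) : ℕ :=
  Nat.card (G.sg H).ConnectedComponent

/-- The Tutte polynomial of `G` (via the Whitney rank / subset expansion, which is
the closed form of the deletion-contraction recursion), evaluated at `x`, `y`.
Here `k A - k univ = r(E) - r(A)` and `A.card + k A - card V = |A| - r(A)`. -/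
noncomputable def tutteEval (G : Multigraph) {R : Type} [CommRing R] (x y : R) : R :=
  ∑ A : Finset G.E,
    (x - 1) ^ (G.k A - G.k Finset.univ) *
      (y - 1) ^ (A.card + G.k A - Fintype.card G.V)

/-- A loop is an edge joining a vertex to itself. -/
def IsLoop (G : Multigraph) (e : G.E) : Prop := (G.ends e).IsDiag

/-- `e ∈ H` is a bridge of the spanning subgraph `G|H`: deleting it changes
(necessarily increases) the number of connected components. -/
def IsBridgeIn (G : Multigraph) (H : Finset G.E) (e : G.E) : Prop :=
  G.k (H.erase e) ≠ G.k H

/-- `e` is contained in a cycle of `G|H`: it is a loop (a cycle of length one) or its two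
(distinct) endpoints remain connected after deleting it. -/
def MemCycle (G : Multigraph) (H : Finset G.E) (e : G.E) : Prop :=
  ∃ x y, G.ends e = s(x, y) ∧ (x = y ∨ (G.sg (H.erase e)).Reachable x y)

/-- `G|H`: restriction (spanning subgraph) to the edges of `H`. -/
def restrict (G : Multigraph) (H : Finset G.E) : Multigraph where
  V := G.V
  E := {e : G.E // e ∈ H}
  ends := fun e => G.ends e.1

/-- `G/H`: contraction of all the edges of `H`. -/
noncomputable def contract (G : Multigraph) (H : Finset G.E) : Multigraph where
  V := (G.sg H).ConnectedComponent
  E := {e : G.E // e ∉ H}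
  fintypeV := Fintype.ofFinite _
  decEqV := Classical.decEq _
  ends := fun e => (G.ends e.1).map (SimpleGraph.connectedComponentMk (G.sg H))


/-! ### Auxiliary lemmas -/

variable (G : Multigraph)

lemma sg_adj_iff {H : Finset G.E} {x y : G.V} :
    (G.sg H).Adj x y ↔ x ≠ y ∧ ∃ e ∈ H, G.ends e = s(x, y) := by
  constructor
  · rintro ⟨hne, ⟨e, he, hs⟩ | ⟨e, he, hs⟩⟩
    · exact ⟨hne, e, he, hs⟩
    · exact ⟨hne, e, he, hs.trans (Sym2.eq_swap)⟩
  · rintro ⟨hne, e, he, hs⟩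
    exact ⟨hne, Or.inl ⟨e, he, hs⟩⟩

lemma k_empty : G.k (∅ : Finset G.E) = Fintype.card G.V := by
  have hbot : G.sg ∅ = ⊥ := by
    ext x y
    simp [sg_adj_iff]
  have hbij : Function.Bijective ((G.sg ∅).connectedComponentMk) := by
    constructor
    · intro a b hab
      have := SimpleGraph.ConnectedComponent.exact hab
      rw [hbot] at this
      exact SimpleGraph.reachable_bot.1 this
    · exact fun c => c.exists_rep
  unfold k
  rw [← Nat.card_eq_fintype_card, Nat.card_eq_of_bijective _ hbij]

lemma sg_mono {A B : Finset G.E} (h : A ⊆ B) : G.sg A ≤ G.sg B := by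
  intro x y hxy
  rw [sg_adj_iff] at hxy ⊢
  obtain ⟨hne, e, he, hs⟩ := hxy
  exact ⟨hne, e, h he, hs⟩

lemma k_le_of_subset {A B : Finset G.E} (h : A ⊆ B) : G.k B ≤ G.k A := by
  unfold k
  refine Nat.card_le_card_of_surjective
    (SimpleGraph.ConnectedComponent.map (SimpleGraph.Hom.ofLE (G.sg_mono h))) ?_
  intro c
  refine SimpleGraph.ConnectedComponent.ind (fun v => ?_) c
  exact ⟨(G.sg A).connectedComponentMk v, rfl⟩

lemma reach_insert {A : Finset G.E} {e : G.E} {x y : G.V} (hxy : G.ends e = s(x, y))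
    {u v : G.V} (h : (G.sg (insert e A)).Reachable u v) :
    (G.sg A).Reachable u v ∨ ((G.sg A).Reachable u x ∧ (G.sg A).Reachable y v) ∨
      ((G.sg A).Reachable u y ∧ (G.sg A).Reachable x v) := by
  obtain ⟨w⟩ := h
  induction w with
  | nil => exact Or.inl (SimpleGraph.Reachable.refl _)
  | @cons u a v h' p ih =>
    obtain ⟨hne, e', he', hs⟩ := (G.sg_adj_iff).1 h'
    rcases Finset.mem_insert.1 he' with rfl | heA
    · rcases Sym2.eq_iff.1 (hxy.symm.trans hs) with ⟨rfl, rfl⟩ | ⟨rfl, rfl⟩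
      · rcases ih with h1 | h2 | h3
        · exact Or.inr (Or.inl ⟨SimpleGraph.Reachable.refl _, h1⟩)
        · exact Or.inr (Or.inl ⟨SimpleGraph.Reachable.refl _, h2.2⟩)
        · exact Or.inl h3.2
      · rcases ih with h1 | h2 | h3
        · exact Or.inr (Or.inr ⟨SimpleGraph.Reachable.refl _, h1⟩)
        · exact Or.inl h2.2
        · exact Or.inr (Or.inr ⟨SimpleGraph.Reachable.refl _, h3.2⟩)
    · have hr : (G.sg A).Reachable u a :=
        ((G.sg_adj_iff).2 ⟨hne, e', heA, hs⟩).reachable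
      rcases ih with h1 | h2 | h3
      · exact Or.inl (hr.trans h1)
      · exact Or.inr (Or.inl ⟨hr.trans h2.1, h2.2⟩)
      · exact Or.inr (Or.inr ⟨hr.trans h3.1, h3.2⟩)

lemma k_le_insert (A : Finset G.E) (e : G.E) : G.k A ≤ G.k (insert e A) + 1 := by
  classical
  by_cases heA : e ∈ A
  · rw [Finset.insert_eq_self.2 heA]; exact Nat.le_succ _
  obtain ⟨⟨x, y⟩, hxy⟩ := Quot.exists_rep (G.ends e)
  have hxy : G.ends e = s(x, y) := hxy.symm
  set f := SimpleGraph.ConnectedComponent.map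
    (SimpleGraph.Hom.ofLE (G.sg_mono (Finset.subset_insert e A))) with hf
  set my := (G.sg A).connectedComponentMk y with hmy
  have hfc : ∀ w : G.V, f ((G.sg A).connectedComponentMk w)
      = (G.sg (insert e A)).connectedComponentMk w := fun w => rfl
  have hinj : Function.Injective (fun c => if c = my then Sum.inr () else Sum.inl (f c) :
      (G.sg A).ConnectedComponent → (G.sg (insert e A)).ConnectedComponent ⊕ Unit) := by
    intro c1 c2 hcc
    by_cases h1 : c1 = my <;> by_cases h2 : c2 = my
    · exact h1.trans h2.symm
    · simp [h1, h2] at hcc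
    · simp [h1, h2] at hcc
    · simp only [h1, h2, if_false, Sum.inl.injEq] at hcc
      obtain ⟨p, rfl⟩ := c1.exists_rep
      obtain ⟨q, rfl⟩ := c2.exists_rep
      have hre := SimpleGraph.ConnectedComponent.exact
        (show (G.sg (insert e A)).connectedComponentMk p
            = (G.sg (insert e A)).connectedComponentMk q from hcc)
      rcases G.reach_insert hxy hre with hh | hh | hh
      · exact SimpleGraph.ConnectedComponent.sound hh
      · exact absurd (SimpleGraph.ConnectedComponent.sound hh.2.symm) h2
      · exact absurd (SimpleGraph.ConnectedComponent.sound hh.1) h1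
  have hcard := Nat.card_le_card_of_injective _ hinj
  unfold k
  simpa [Nat.card_sum] using hcard

lemma k_le_union (C D : Finset G.E) : G.k C ≤ G.k (C ∪ D) + D.card := by
  classical
  induction D using Finset.induction_on with
  | empty => simp
  | @insert a s ha ih =>
    have h1 := G.k_le_insert (C ∪ s) a
    rw [Finset.union_insert]
    rw [Finset.card_insert_of_notMem ha]
    omega

lemma card_V_le (A : Finset G.E) : Fintype.card G.V ≤ A.card + G.k A := by
  have := G.k_le_union ∅ A
  rw [Finset.empty_union, G.k_empty] at this
  omega

lemma restrict_sg (H : Finset G.E) (A : Finset (G.restrict H).E) :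
    (G.restrict H).sg A = G.sg (A.map (Function.Embedding.subtype (· ∈ H))) := by
  ext x y
  rw [sg_adj_iff]
  refine Iff.trans ?_ (G.sg_adj_iff).symm
  refine and_congr_right fun _ => ?_
  constructor
  · rintro ⟨e, he, hs⟩
    exact ⟨e.1, Finset.mem_map.2 ⟨e, he, rfl⟩, hs⟩
  · rintro ⟨e', he', hs⟩
    obtain ⟨e, he, rfl⟩ := Finset.mem_map.1 he'
    exact ⟨e, he, hs⟩

lemma restrict_k (H : Finset G.E) (A : Finset (G.restrict H).E) :
    (G.restrict H).k A = G.k (A.map (Function.Embedding.subtype (· ∈ H))) := by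
  unfold k
  rw [restrict_sg]
  rfl

lemma univ_map_subtype (H : Finset G.E) :
    (Finset.univ : Finset (G.restrict H).E).map (Function.Embedding.subtype (· ∈ H)) = H := by
  ext e
  constructor
  · intro h
    obtain ⟨a, _, rfl⟩ := Finset.mem_map.1 h
    exact a.2
  · intro h
    exact Finset.mem_map.2 ⟨(⟨e, h⟩ : {e : G.E // e ∈ H}), Finset.mem_univ _, rfl⟩

lemma restrict_k_univ (H : Finset G.E) :
    (G.restrict H).k Finset.univ = G.k H := by
  rw [restrict_k, univ_map_subtype]

lemma contract_reach_of {H : Finset G.E} {B : Finset (G.contract H).E} {u v : G.V}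
    (h : (G.sg (H ∪ B.map (Function.Embedding.subtype (· ∉ H)))).Reachable u v) :
    ((G.contract H).sg B).Reachable ((G.sg H).connectedComponentMk u)
      ((G.sg H).connectedComponentMk v) := by
  obtain ⟨w⟩ := h
  induction w with
  | nil => exact SimpleGraph.Reachable.refl _
  | @cons u a v h' p ih =>
    refine SimpleGraph.Reachable.trans ?_ ih
    obtain ⟨hne, e, he, hs⟩ := (G.sg_adj_iff).1 h'
    rcases Finset.mem_union.1 he with heH | heB
    · have : (G.sg H).connectedComponentMk u = (G.sg H).connectedComponentMk a :=
        SimpleGraph.ConnectedComponent.sound ((G.sg_adj_iff).2 ⟨hne, e, heH, hs⟩).reachable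
      rw [this]
      exact SimpleGraph.Reachable.refl _
    · obtain ⟨b, hb, rfl⟩ := Finset.mem_map.1 heB
      by_cases hmk : (G.sg H).connectedComponentMk u = (G.sg H).connectedComponentMk a
      · rw [hmk]
        exact SimpleGraph.Reachable.refl _
      · refine SimpleGraph.Adj.reachable (((G.contract H).sg_adj_iff).2 ⟨hmk, b, hb, ?_⟩)
        show (G.ends b.1).map _ = _
        rw [show G.ends b.1 = s(u, a) from hs, Sym2.map_pair_eq]
        rfl

lemma reach_of_contract {H : Finset G.E} {B : Finset (G.contract H).E}
    {c d : (G.contract H).V} (h : ((G.contract H).sg B).Reachable c d) :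
    ∀ u v : G.V, (G.sg H).connectedComponentMk u = c → (G.sg H).connectedComponentMk v = d →
      (G.sg (H ∪ B.map (Function.Embedding.subtype (· ∉ H)))).Reachable u v := by
  obtain ⟨w⟩ := h
  induction w with
  | nil =>
    intro u v hu hv
    have : (G.sg H).Reachable u v :=
      SimpleGraph.ConnectedComponent.exact (hu.trans hv.symm)
    exact this.mono (G.sg_mono Finset.subset_union_left)
  | @cons c c' d h' p ih =>
    intro u v hu hv
    obtain ⟨hne, b, hb, hs⟩ := ((G.contract H).sg_adj_iff).1 h'
    obtain ⟨⟨pp, qq⟩, hpq⟩ := Quot.exists_rep (G.ends b.1)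
    have hpq : G.ends b.1 = s(pp, qq) := hpq.symm
    have hs' : s((G.sg H).connectedComponentMk pp, (G.sg H).connectedComponentMk qq) = s(c, c') := by
      rw [← Sym2.map_pair_eq, ← hpq]; exact hs
    have hmem : b.1 ∈ H ∪ B.map (Function.Embedding.subtype (· ∉ H)) :=
      Finset.mem_union_right _ (Finset.mem_map.2 ⟨b, hb, rfl⟩)
    rcases Sym2.eq_iff.1 hs' with ⟨hc, hc'⟩ | ⟨hc, hc'⟩
    · have h1 : (G.sg H).Reachable u pp :=
        SimpleGraph.ConnectedComponent.exact (hu.trans hc.symm)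
      have h2 : (G.sg (H ∪ B.map (Function.Embedding.subtype (· ∉ H)))).Adj pp qq := by
        refine (G.sg_adj_iff).2 ⟨?_, b.1, hmem, hpq⟩
        rintro rfl
        exact hne (hc.symm.trans hc')
      exact ((h1.mono (G.sg_mono Finset.subset_union_left)).trans h2.reachable).trans
        (ih qq v hc' hv)
    · have h1 : (G.sg H).Reachable u qq :=
        SimpleGraph.ConnectedComponent.exact (hu.trans hc'.symm)
      have h2 : (G.sg (H ∪ B.map (Function.Embedding.subtype (· ∉ H)))).Adj qq pp := by
        refine (G.sg_adj_iff).2 ⟨?_, b.1, hmem, hpq.trans Sym2.eq_swap⟩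
        rintro rfl
        exact hne (hc'.symm.trans hc)
      exact ((h1.mono (G.sg_mono Finset.subset_union_left)).trans h2.reachable).trans
        (ih pp v hc hv)

lemma contract_k (H : Finset G.E) (B : Finset (G.contract H).E) :
    (G.contract H).k B = G.k (H ∪ B.map (Function.Embedding.subtype (· ∉ H))) := by
  classical
  set ℋ := G.sg (H ∪ B.map (Function.Embedding.subtype (· ∉ H))) with hℋ
  set 𝒢 := (G.contract H).sg B with h𝒢
  have hψ : ∀ (c : (G.sg H).ConnectedComponent), True := fun _ => trivial
  let ψ : (G.sg H).ConnectedComponent → ℋ.ConnectedComponent :=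
    SimpleGraph.ConnectedComponent.lift (fun v => ℋ.connectedComponentMk v)
      (fun v w p _ => SimpleGraph.ConnectedComponent.sound
        (p.reachable.mono (G.sg_mono Finset.subset_union_left)))
  have hψmk : ∀ v : G.V, ψ ((G.sg H).connectedComponentMk v) = ℋ.connectedComponentMk v :=
    fun _ => rfl
  let F : ℋ.ConnectedComponent → 𝒢.ConnectedComponent :=
    SimpleGraph.ConnectedComponent.lift
      (fun v => 𝒢.connectedComponentMk ((G.sg H).connectedComponentMk v))
      (fun v w p _ => SimpleGraph.ConnectedComponent.sound
        (G.contract_reach_of p.reachable))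
  let Finv : 𝒢.ConnectedComponent → ℋ.ConnectedComponent :=
    SimpleGraph.ConnectedComponent.lift ψ
      (by
        intro c d p _
        obtain ⟨u, rfl⟩ := c.exists_rep
        obtain ⟨v, rfl⟩ := d.exists_rep
        exact SimpleGraph.ConnectedComponent.sound
          (G.reach_of_contract p.reachable u v rfl rfl))
  have hbij : Function.Bijective F := by
    constructor
    · intro c1 c2 hc
      have h12 : Finv (F c1) = Finv (F c2) := by rw [hc]
      obtain ⟨u, rfl⟩ := c1.exists_rep
      obtain ⟨v, rfl⟩ := c2.exists_rep
      exact h12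
    · intro c
      obtain ⟨w, rfl⟩ := c.exists_rep
      obtain ⟨u, rfl⟩ := w.exists_rep
      exact ⟨ℋ.connectedComponentMk u, rfl⟩
  unfold k
  exact (Nat.card_eq_of_bijective _ hbij).symm

lemma contract_cardV (H : Finset G.E) :
    Fintype.card (G.contract H).V = G.k H := by
  unfold k
  exact (Nat.card_eq_fintype_card).symm

lemma contract_univ_map (H : Finset G.E) :
    H ∪ (Finset.univ : Finset (G.contract H).E).map (Function.Embedding.subtype (· ∉ H))
      = Finset.univ := by
  ext e
  by_cases he : e ∈ H <;> simp [he]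
  exact Finset.mem_map.2 ⟨(⟨e, he⟩ : {e : G.E // e ∉ H}), Finset.mem_univ _, rfl⟩

lemma contract_k_univ (H : Finset G.E) :
    (G.contract H).k Finset.univ = G.k Finset.univ := by
  rw [contract_k, contract_univ_map]

lemma restrict_cardV (H : Finset G.E) :
    Fintype.card (G.restrict H).V = Fintype.card G.V := rfl

lemma neg_one_pow_sub {R : Type*} [CommRing R] {a b : ℕ} (h : b ≤ a) :
    (-1 : R) ^ (a - b) = (-1) ^ a * (-1) ^ b := by
  have h1 : ((-1 : R) ^ b) * ((-1) ^ b) = 1 := by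
    rw [← mul_pow]; norm_num
  calc (-1 : R) ^ (a - b) = (-1) ^ (a - b) * ((-1) ^ b * (-1) ^ b) := by rw [h1, mul_one]
    _ = ((-1) ^ (a - b) * (-1) ^ b) * (-1) ^ b := by ring
    _ = (-1) ^ a * (-1) ^ b := by rw [← pow_add, Nat.sub_add_cancel h]

lemma restrict_eval (H : Finset G.E) :
    (G.restrict H).tutteEval (0 : Polynomial ℤ) Polynomial.X
      = ∑ A ∈ H.powerset, (-1 : Polynomial ℤ) ^ (G.k A - G.k H) *
          (Polynomial.X - 1) ^ (A.card + G.k A - Fintype.card G.V) := by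
  classical
  unfold tutteEval
  refine Finset.sum_nbij' (i := fun A => A.map (Function.Embedding.subtype (· ∈ H)))
    (j := fun A => A.subtype (· ∈ H)) ?_ ?_ ?_ ?_ ?_
  · intro A _
    simp only [Finset.mem_powerset]
    intro e he
    obtain ⟨a, _, rfl⟩ := Finset.mem_map.1 he
    exact a.2
  · intro A _
    exact Finset.mem_univ _
  · intro A _
    ext ⟨e, he⟩
    simp only [Finset.mem_subtype, Finset.mem_map, Function.Embedding.coe_subtype,
      Subtype.exists, exists_and_right, exists_eq_right]
    exact ⟨fun h => by obtain ⟨a, ha, hae⟩ := Finset.mem_map.1 h; subst hae; exact ha,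
      fun h => Finset.mem_map.2 ⟨⟨e, he⟩, h, rfl⟩⟩
  · intro A hA
    rw [Finset.subtype_map, Finset.filter_true_of_mem]
    exact fun e he => Finset.mem_powerset.1 hA he
  · intro A _
    rw [G.restrict_k, G.restrict_k_univ, G.restrict_cardV]
    rw [show (A.map (Function.Embedding.subtype (· ∈ H))).card = A.card from Finset.card_map _]
    rw [show ((0 : Polynomial ℤ) - 1) = -1 by ring]

lemma contract_eval (H : Finset G.E) :
    (G.contract H).tutteEval (Polynomial.X : Polynomial ℤ) 0
      = ∑ B ∈ Hᶜ.powerset, (Polynomial.X - 1) ^ (G.k (H ∪ B) - G.k Finset.univ) *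
          (-1 : Polynomial ℤ) ^ (B.card + G.k (H ∪ B) - G.k H) := by
  classical
  unfold tutteEval
  refine Finset.sum_nbij' (i := fun B => B.map (Function.Embedding.subtype (· ∉ H)))
    (j := fun B => B.subtype (· ∉ H)) ?_ ?_ ?_ ?_ ?_
  · intro B _
    simp only [Finset.mem_powerset]
    intro e he
    obtain ⟨b, _, rfl⟩ := Finset.mem_map.1 he
    simpa using b.2
  · intro B _
    exact Finset.mem_univ _
  · intro B _
    ext ⟨e, he⟩
    simp only [Finset.mem_subtype, Finset.mem_map, Function.Embedding.coe_subtype,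
      Subtype.exists, exists_and_right, exists_eq_right]
    exact ⟨fun h => by obtain ⟨a, ha, hae⟩ := Finset.mem_map.1 h; subst hae; exact ha,
      fun h => Finset.mem_map.2 ⟨⟨e, he⟩, h, rfl⟩⟩
  · intro B hB
    rw [Finset.subtype_map, Finset.filter_true_of_mem]
    intro e he
    simpa using Finset.mem_powerset.1 hB he
  · intro B _
    rw [G.contract_k, G.contract_k_univ, G.contract_cardV]
    rw [show (B.map (Function.Embedding.subtype (· ∉ H))).card = B.card from Finset.card_map _]
    rw [show ((0 : Polynomial ℤ) - 1) = -1 by ring]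

lemma sign_merge {R : Type*} [CommRing R] {a b c : ℕ} (h1 : c ≤ a) (h2 : c ≤ b) (p q : R) :
    ((-1) ^ (a - c) * p) * (q * (-1) ^ (b - c)) = ((-1) ^ a * (-1) ^ b) * (p * q) := by
  rw [neg_one_pow_sub h1, neg_one_pow_sub h2]
  have hc : ((-1 : R) ^ c) * ((-1) ^ c) = 1 := by rw [← mul_pow]; norm_num
  calc ((-1 : R) ^ a * (-1) ^ c * p) * (q * ((-1) ^ b * (-1) ^ c))
      = ((-1) ^ a * (-1) ^ b) * (p * q) * ((-1) ^ c * (-1) ^ c) := by ring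
    _ = ((-1) ^ a * (-1) ^ b) * (p * q) := by rw [hc, mul_one]

lemma sum_union_reindex {α : Type*} [DecidableEq α] [Fintype α] {M : Type*} [AddCommMonoid M]
    (H : Finset α) (f : Finset α → M) :
    ∑ B ∈ Hᶜ.powerset, f B
      = ∑ C ∈ Finset.univ.filter (fun C => H ⊆ C), f (C \ H) := by
  refine Finset.sum_nbij' (i := fun B => H ∪ B) (j := fun C => C \ H) ?_ ?_ ?_ ?_ ?_
  · intro B _
    exact Finset.mem_filter.2 ⟨Finset.mem_univ _, Finset.subset_union_left⟩
  · intro C _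
    refine Finset.mem_powerset.2 fun e he => ?_
    simpa using (Finset.mem_sdiff.1 he).2
  · intro B hB
    refine Finset.union_sdiff_cancel_left (Finset.disjoint_left.2 fun e heH heB => ?_)
    have := Finset.mem_powerset.1 hB heB
    simp at this
    exact this heH
  · intro C hC
    exact Finset.union_sdiff_of_subset (Finset.mem_filter.1 hC).2
  · intro B hB
    congr 1
    refine (Finset.union_sdiff_cancel_left (Finset.disjoint_left.2 fun e heH heB => ?_)).symm
    have := Finset.mem_powerset.1 hB heB
    simp at this
    exact this heH

/-- The summand after both factors have been expanded and reindexed. -/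
noncomputable def Rest (G : Multigraph) (A C : Finset G.E) : Polynomial ℤ :=
  ((-1) ^ (G.k A) * (-1) ^ (G.k C)) *
    ((Polynomial.X - 1) ^ (A.card + G.k A - Fintype.card G.V) *
      (Polynomial.X - 1) ^ (G.k C - G.k Finset.univ))

lemma sum_powerset_neg_one_pow_card' {R : Type*} [CommRing R] {α : Type*} [DecidableEq α]
    (x : Finset α) :
    ∑ m ∈ x.powerset, (-1 : R) ^ m.card = if x = ∅ then 1 else 0 := by
  have h := Finset.sum_powerset_neg_one_pow_card (x := x)
  have h2 : ((∑ m ∈ x.powerset, (-1 : ℤ) ^ m.card : ℤ) : R)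
      = ∑ m ∈ x.powerset, (-1 : R) ^ m.card := by
    push_cast
    rfl
  rw [← h2, h]
  split_ifs <;> simp

lemma alt_sum (A C : Finset G.E) :
    (∑ H ∈ Finset.univ.filter (fun H => A ⊆ H ∧ H ⊆ C), ((-1 : Polynomial ℤ)) ^ ((C \ H).card))
      = if A = C then 1 else 0 := by
  classical
  by_cases hAC : A ⊆ C
  · have : (∑ H ∈ Finset.univ.filter (fun H => A ⊆ H ∧ H ⊆ C),
        ((-1 : Polynomial ℤ)) ^ ((C \ H).card))
        = ∑ D ∈ (C \ A).powerset, ((-1 : Polynomial ℤ)) ^ D.card := by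
      refine Finset.sum_nbij' (i := fun H => C \ H) (j := fun D => C \ D) ?_ ?_ ?_ ?_ ?_
      · intro H hH
        obtain ⟨-, h1, h2⟩ := Finset.mem_filter.1 hH
        exact Finset.mem_powerset.2 (Finset.sdiff_subset_sdiff (Finset.Subset.refl C) h1)
      · intro D hD
        have hD' := Finset.mem_powerset.1 hD
        refine Finset.mem_filter.2 ⟨Finset.mem_univ _, fun a ha => ?_, Finset.sdiff_subset⟩
        refine Finset.mem_sdiff.2 ⟨hAC ha, fun haD => ?_⟩
        exact (Finset.mem_sdiff.1 (hD' haD)).2 ha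
      · intro H hH
        exact Finset.sdiff_sdiff_eq_self (Finset.mem_filter.1 hH).2.2
      · intro D hD
        exact Finset.sdiff_sdiff_eq_self ((Finset.mem_powerset.1 hD).trans Finset.sdiff_subset)
      · intro H _
        rfl
    rw [this, sum_powerset_neg_one_pow_card']
    refine if_congr ?_ rfl rfl
    rw [Finset.sdiff_eq_empty_iff_subset]
    exact ⟨fun h => Finset.Subset.antisymm hAC h, fun h => h ▸ Finset.Subset.refl _⟩
  · rw [Finset.filter_false_of_mem, Finset.sum_empty]
    · rw [if_neg]
      rintro rfl
      exact hAC (Finset.Subset.refl _)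
    · rintro H - ⟨h1, h2⟩
      exact hAC (h1.trans h2)


lemma powerset_eq_filter {α : Type*} [DecidableEq α] [Fintype α] (s : Finset α) :
    s.powerset = Finset.univ.filter (· ⊆ s) := by
  ext t; simp

lemma step1 (H : Finset G.E) :
    (G.restrict H).tutteEval (0 : Polynomial ℤ) Polynomial.X *
      (G.contract H).tutteEval (Polynomial.X : Polynomial ℤ) 0
    = ∑ A : Finset G.E, ∑ C : Finset G.E,
        if A ⊆ H ∧ H ⊆ C then ((-1 : Polynomial ℤ)) ^ ((C \ H).card) * G.Rest A C else 0 := by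
  classical
  rw [G.restrict_eval, G.contract_eval, Finset.sum_mul_sum, powerset_eq_filter,
    Finset.sum_filter]
  refine Finset.sum_congr rfl fun A _ => ?_
  by_cases hA : A ⊆ H
  · rw [if_pos hA]
    have hexp :
        (∑ B ∈ Hᶜ.powerset,
          ((-1 : Polynomial ℤ) ^ (G.k A - G.k H) *
              (Polynomial.X - 1) ^ (A.card + G.k A - Fintype.card G.V)) *
            ((Polynomial.X - 1) ^ (G.k (H ∪ B) - G.k Finset.univ) *
              (-1 : Polynomial ℤ) ^ (B.card + G.k (H ∪ B) - G.k H)))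
        = ∑ C ∈ Finset.univ.filter (fun C => H ⊆ C),
            ((-1 : Polynomial ℤ)) ^ ((C \ H).card) * G.Rest A C := by
      rw [sum_union_reindex]
      refine Finset.sum_congr rfl fun C hC => ?_
      have hHC : H ⊆ C := (Finset.mem_filter.1 hC).2
      rw [Finset.union_sdiff_of_subset hHC]
      have h1 : G.k H ≤ G.k A := G.k_le_of_subset hA
      have h2 : G.k H ≤ (C \ H).card + G.k C := by
        have := G.k_le_union H (C \ H)
        rw [Finset.union_sdiff_of_subset hHC] at this
        omega
      rw [sign_merge h1 h2]
      unfold Rest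
      ring
    rw [hexp, Finset.sum_filter]
    refine Finset.sum_congr rfl fun C _ => ?_
    exact (if_congr (and_iff_right hA).symm rfl rfl)
  · rw [if_neg hA]
    simp [hA]

lemma step2 (A C : Finset G.E) :
    (∑ H : Finset G.E,
        if A ⊆ H ∧ H ⊆ C then ((-1 : Polynomial ℤ)) ^ ((C \ H).card) * G.Rest A C else 0)
      = (if A = C then (1 : Polynomial ℤ) else 0) * G.Rest A C := by
  classical
  have hsplit : ∀ H : Finset G.E,
      (if A ⊆ H ∧ H ⊆ C then ((-1 : Polynomial ℤ)) ^ ((C \ H).card) * G.Rest A C else 0)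
        = (if A ⊆ H ∧ H ⊆ C then ((-1 : Polynomial ℤ)) ^ ((C \ H).card) else 0) * G.Rest A C := by
    intro H
    by_cases h : A ⊆ H ∧ H ⊆ C <;> simp [h]
  rw [Finset.sum_congr rfl fun H _ => hsplit H, ← Finset.sum_mul, ← Finset.sum_filter,
    G.alt_sum]

lemma diag_term (A : Finset G.E) :
    (Polynomial.X - 1 : Polynomial ℤ) ^ (G.k A - G.k Finset.univ) *
        (Polynomial.X - 1) ^ (A.card + G.k A - Fintype.card G.V)
      = G.Rest A A := by
  unfold Rest
  have hc : ((-1 : Polynomial ℤ) ^ (G.k A)) * ((-1) ^ (G.k A)) = 1 := by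
    rw [← mul_pow]; norm_num
  rw [hc, one_mul]
  ring

end Multigraph

open Multigraph

/-- For any graph `G`, the symmetrized Tutte polynomial satisfies
`χ_G(t,t) = ∑_{H ⊆ E(G)} χ_{G|H}(0,t) · χ_{G/H}(t,0)`. -/
theorem symmetrized_tutte_state_sum (G : Multigraph) :
    G.tutteEval (Polynomial.X : Polynomial ℤ) Polynomial.X =
      ∑ H : Finset G.E,
        (G.restrict H).tutteEval (0 : Polynomial ℤ) Polynomial.X *
          (G.contract H).tutteEval (Polynomial.X : Polynomial ℤ) 0 := by
  classical
  calc G.tutteEval (Polynomial.X : Polynomial ℤ) Polynomial.X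
      = ∑ A : Finset G.E, G.Rest A A := by
        unfold tutteEval
        exact Finset.sum_congr rfl fun A _ => G.diag_term A
    _ = ∑ A : Finset G.E, ∑ C : Finset G.E,
          (if A = C then (1 : Polynomial ℤ) else 0) * G.Rest A C := by
        refine Finset.sum_congr rfl fun A _ => ?_
        have h : ∀ C : Finset G.E,
            (if A = C then (1 : Polynomial ℤ) else 0) * G.Rest A C
              = if A = C then G.Rest A C else 0 := by
          intro C
          by_cases h : A = C <;> simp [h]
        rw [Finset.sum_congr rfl fun C _ => h C, Finset.sum_ite_eq,
          if_pos (Finset.mem_univ A)]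
    _ = ∑ A : Finset G.E, ∑ C : Finset G.E, ∑ H : Finset G.E,
          (if A ⊆ H ∧ H ⊆ C then ((-1 : Polynomial ℤ)) ^ ((C \ H).card) * G.Rest A C
            else 0) := by
        exact Finset.sum_congr rfl fun A _ => Finset.sum_congr rfl fun C _ =>
          (G.step2 A C).symm
    _ = ∑ A : Finset G.E, ∑ H : Finset G.E, ∑ C : Finset G.E,
          (if A ⊆ H ∧ H ⊆ C then ((-1 : Polynomial ℤ)) ^ ((C \ H).card) * G.Rest A C
            else 0) := Finset.sum_congr rfl fun A _ => Finset.sum_comm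
    _ = ∑ H : Finset G.E, ∑ A : Finset G.E, ∑ C : Finset G.E,
          (if A ⊆ H ∧ H ⊆ C then ((-1 : Polynomial ℤ)) ^ ((C \ H).card) * G.Rest A C
            else 0) := Finset.sum_comm
    _ = ∑ H : Finset G.E,
          (G.restrict H).tutteEval (0 : Polynomial ℤ) Polynomial.X *
            (G.contract H).tutteEval (Polynomial.X : Polynomial ℤ) 0 :=
        Finset.sum_congr rfl fun H _ => (G.step1 H).symm
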